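/- arXiv:2105.06542 — 3 statements merged into one kernel-verified Lean document; each statement's English description precedes it below -/
import Mathlib

section
/- Let p, q, z be complex numbers such that z does not lie on the closed line segment from p to q. Then the contour integral of 1/(w − z) along the segment from p to q equals the principal branch of the complex logarithm of (q − z)/(p − z); explicitly, ∫_{t=0}^{1} (q − p)/(((1 − t)·p + t·q) − z) dt = Log((q − z)/(p − z)). -/
open Complex intervalIntegral Real

/-- The contour integral of `1/(w - z)` along the straight segment from `p` to `q`,
avoiding `z`, equals the principal complex logarithm of `(q - z)/(p - z)`. -/
theorem stmt_0 (p q z : ℂ) (hz : z ∉ segment ℝ p q) :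
    (∫ t in (0:ℝ)..1, (q - p) / (((1 - (t : ℂ)) * p + (t : ℂ) * q) - z))
      = Complex.log ((q - z) / (p - z)) := by
  -- separation: get linear functional
  have hcompact : IsCompact (segment ℝ p q) := by
    rw [segment_eq_image]
    exact isCompact_Icc.image (by continuity)
  obtain ⟨f, s, hfz, hf⟩ := geometric_hahn_banach_point_closed (convex_segment p q)
    hcompact.isClosed hz
  -- represent f as w ↦ (u * w).re
  set u : ℂ := Complex.ofReal (f 1) - Complex.ofReal (f Complex.I) * Complex.I with hu
  have hrep : ∀ w : ℂ, f w = (u * w).re := by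
    intro w
    have hw : w = w.re • (1:ℂ) + w.im • Complex.I := by
      simp [Complex.ext_iff]
    calc f w = f (w.re • (1:ℂ) + w.im • Complex.I) := by rw [← hw]
      _ = w.re * f 1 + w.im * f Complex.I := by
          rw [map_add, map_smul, map_smul]; simp [smul_eq_mul]
      _ = (u * w).re := by simp [hu, Complex.mul_re]; ring
  -- positivity along the segment
  have hpos : ∀ t : ℝ, t ∈ Set.Icc (0:ℝ) 1 →
      0 < (u * (((1 - (t:ℂ)) * p + (t:ℂ) * q) - z)).re := by
    intro t ht
    have hmem : (1 - (t:ℂ)) * p + (t:ℂ) * q ∈ segment ℝ p q := by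
      rw [segment_eq_image]
      exact ⟨t, ht, by push_cast [Complex.real_smul]; ring⟩
    have h1 := (hfz.trans (hf _ hmem))
    rw [hrep, hrep] at h1
    have : (u * (((1 - (t:ℂ)) * p + (t:ℂ) * q) - z)).re
        = (u * ((1 - (t:ℂ)) * p + (t:ℂ) * q)).re - (u * z).re := by
      rw [mul_sub, Complex.sub_re]
    linarith [this]
  -- derivative of the log along the path
  set w : ℝ → ℂ := fun t => ((1 - (t:ℂ)) * p + (t:ℂ) * q) - z with hwdef
  have hwderiv : ∀ t : ℝ, HasDerivAt (fun t : ℝ => u * w t) (u * (q - p)) t := by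
    intro t
    have h1 : HasDerivAt (fun t : ℝ => (t:ℂ)) 1 t := by
      simpa using (hasDerivAt_id t).ofReal_comp
    have heq : (fun t : ℝ => u * w t) = fun t : ℝ => (t:ℂ) * (u * (q - p)) + u * (p - z) := by
      funext t; simp only [hwdef]; ring
    rw [heq]
    simpa using (h1.mul_const (u * (q - p))).add_const (u * (p - z))
  have hne : ∀ t : ℝ, t ∈ Set.Icc (0:ℝ) 1 → w t - 0 ≠ 0 := by
    intro t ht h
    have := hpos t ht
    rw [sub_zero] at h
    rw [show ((1 - (t:ℂ)) * p + (t:ℂ) * q) - z = w t from rfl, h, mul_zero] at this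
    simp at this
  have hune : u ≠ 0 := by
    intro h
    have := hpos 0 ⟨le_refl 0, zero_le_one⟩
    rw [h, zero_mul] at this; simp at this
  have key : ∀ t ∈ Set.uIcc (0:ℝ) 1,
      HasDerivAt (fun t : ℝ => Complex.log (u * w t)) ((q - p) / w t) t := by
    intro t ht
    rw [Set.uIcc_of_le zero_le_one] at ht
    have hmem : u * w t ∈ Complex.slitPlane := Or.inl (hpos t ht)
    have hd := (Complex.hasDerivAt_log hmem).comp t (hwderiv t)
    have hwne : w t ≠ 0 := by simpa using hne t ht
    have : (u * w t)⁻¹ * (u * (q - p)) = (q - p) / w t := by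
      field_simp
    rwa [this] at hd
  have hcont : ContinuousOn (fun t : ℝ => (q - p) / w t) (Set.uIcc (0:ℝ) 1) := by
    rw [Set.uIcc_of_le zero_le_one]
    apply ContinuousOn.div continuousOn_const
    · apply Continuous.continuousOn
      exact (((continuous_const.sub Complex.continuous_ofReal).mul continuous_const).add
        (Complex.continuous_ofReal.mul continuous_const)).sub continuous_const
    · intro t ht; simpa using hne t ht
  have hint := intervalIntegral.integral_eq_sub_of_hasDerivAt key hcont.intervalIntegrable
  have hIeq : (∫ t in (0:ℝ)..1, (q - p) / (((1 - (t : ℂ)) * p + (t : ℂ) * q) - z))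
      = Complex.log (u * (q - z)) - Complex.log (u * (p - z)) := by
    rw [show (fun t : ℝ => (q - p) / (((1 - (t:ℂ)) * p + (t:ℂ) * q) - z))
        = fun t : ℝ => (q - p) / w t from rfl] at *
    rw [hint]
    norm_num [hwdef]
  rw [hIeq]
  -- now compare with log((q-z)/(p-z))
  have hpz : p - z ≠ 0 := by
    have := hne 0 ⟨le_refl 0, zero_le_one⟩
    simpa [hwdef] using this
  have hqz : q - z ≠ 0 := by
    have := hne 1 ⟨zero_le_one, le_refl 1⟩
    simpa [hwdef] using this
  have ha : 0 < (u * (q - z)).re := by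
    have h := hpos 1 ⟨zero_le_one, le_refl 1⟩
    push_cast at h
    rwa [show (1 - (1:ℂ)) * p + 1 * q - z = q - z from by ring] at h
  have hb : 0 < (u * (p - z)).re := by
    have h := hpos 0 ⟨le_refl 0, zero_le_one⟩
    push_cast at h
    rwa [show (1 - (0:ℂ)) * p + 0 * q - z = p - z from by ring] at h
  set L : ℂ := Complex.log (u * (q - z)) - Complex.log (u * (p - z)) with hL
  have ha0 : u * (q - z) ≠ 0 := mul_ne_zero hune hqz
  have hb0 : u * (p - z) ≠ 0 := mul_ne_zero hune hpz
  have hexp : Complex.exp L = (q - z) / (p - z) := by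
    rw [hL, Complex.exp_sub, Complex.exp_log ha0, Complex.exp_log hb0]
    field_simp
  have haarg : |Complex.arg (u * (q - z))| < π / 2 :=
    Complex.abs_arg_lt_pi_div_two_iff.mpr (Or.inl ha)
  have hbarg : |Complex.arg (u * (p - z))| < π / 2 :=
    Complex.abs_arg_lt_pi_div_two_iff.mpr (Or.inl hb)
  have hLim : L.im = Complex.arg (u * (q - z)) - Complex.arg (u * (p - z)) := by
    simp [hL, Complex.log_im]
  have h1 : -π < L.im := by
    rw [hLim]
    rw [abs_lt] at haarg hbarg
    linarith
  have h2 : L.im ≤ π := by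
    rw [hLim]
    rw [abs_lt] at haarg hbarg
    nlinarith [Real.pi_pos]
  rw [← hexp, Complex.log_exp h1 h2]
end

section
/- Let p, q, z be complex numbers such that z does not lie on the closed line segment from p to q. Then the real part of (1/(2πi)) · ∫_{t=0}^{1} (q − p)/(((1 − t)·p + t·q) − z) dt equals (1/(2π)) · arg((q − z)/(p − z)), where arg is the principal argument. -/
open Complex Real

/-- The real part of `(1/(2πi))` times the contour integral of `1/(w - z)` along the
segment from `p` to `q` avoiding `z` equals `(1/(2π))` times the principal argument of
`(q - z)/(p - z)` (Lemma 5.3 of the paper). -/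
theorem stmt_1 (p q z : ℂ) (hz : z ∉ segment ℝ p q) :
    ((1 / (2 * (Real.pi : ℂ) * Complex.I)) *
        ∫ t in (0:ℝ)..1, (q - p) / (((1 - (t : ℂ)) * p + (t : ℂ) * q) - z)).re
      = (1 / (2 * Real.pi)) * Complex.arg ((q - z) / (p - z)) := by
  set a := p - z with ha
  set b := q - p with hb
  have hpq : ∀ t : ℝ, t ∈ Set.Icc (0:ℝ) 1 → ((1 - (t:ℂ)) * p + (t:ℂ) * q) ∈ segment ℝ p q := by
    intro t ht
    refine ⟨1 - t, t, by linarith [ht.2], ht.1, by ring, ?_⟩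
    push_cast [Complex.real_smul]
    ring
  have hp : a ≠ 0 := sub_ne_zero.2 fun h => hz (h ▸ left_mem_segment ℝ p q)
  have hne : ∀ t : ℝ, t ∈ Set.Icc (0:ℝ) 1 → a + (t:ℂ) * b ≠ 0 := by
    intro t ht h
    apply hz
    have : z = (1 - (t:ℂ)) * p + (t:ℂ) * q := by
      have : a + (t:ℂ)*b = ((1 - (t:ℂ)) * p + (t:ℂ) * q) - z := by ring
      rw [this] at h; linear_combination -h
    exact this ▸ hpq t ht
  have hslit : ∀ t : ℝ, t ∈ Set.Icc (0:ℝ) 1 → (a + (t:ℂ)*b)/a ∈ Complex.slitPlane := by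
    intro t ht
    by_contra h
    rw [Complex.mem_slitPlane_iff] at h
    push_neg at h
    obtain ⟨h1, h2⟩ := h
    set r := ((a + (t:ℂ)*b)/a).re with hr
    have hu : a + (t:ℂ)*b = (r:ℂ) * a := by
      have he : (a + (t:ℂ)*b)/a = (r:ℂ) := Complex.ext rfl (by simpa using h2)
      field_simp at he
      linear_combination he
    have hr1 : (0:ℝ) < 1 - r := by linarith
    apply hz
    have hsub : segment ℝ ((1 - (t:ℂ)) * p + (t:ℂ) * q) p ⊆ segment ℝ p q :=
      (convex_segment p q).segment_subset (hpq t ht) (left_mem_segment ℝ p q)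
    apply hsub
    refine ⟨1/(1-r), -r/(1-r), by positivity, by apply div_nonneg <;> linarith, by field_simp; ring, ?_⟩
    rw [Complex.real_smul, Complex.real_smul]
    push_cast
    have hc : ((1 - (t:ℂ)) * p + (t:ℂ) * q) - z = (r:ℂ) * (p - z) := by
      linear_combination hu
    have h1r : ((1 - r : ℝ) : ℂ) ≠ 0 := by exact_mod_cast hr1.ne'
    push_cast at h1r
    field_simp
    linear_combination hc
  have key : ∀ t ∈ Set.uIcc (0:ℝ) 1,
      HasDerivAt (fun t : ℝ => Complex.log ((a + (t:ℂ)*b)/a))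
        ((q - p) / (((1 - (t : ℂ)) * p + (t : ℂ) * q) - z)) t := by
    intro t ht
    rw [Set.uIcc_of_le zero_le_one] at ht
    have h1 : HasDerivAt (fun t : ℝ => (t:ℂ)) 1 t := Complex.ofRealCLM.hasDerivAt
    have h2 : HasDerivAt (fun t : ℝ => (a + (t:ℂ)*b)/a) ((1*b)/a) t :=
      ((h1.mul_const b).const_add a).div_const a
    have h3 := (Complex.hasDerivAt_log (hslit t ht)).comp t h2
    refine h3.congr_deriv ?_
    have hd : ((1 - (t : ℂ)) * p + (t : ℂ) * q) - z = a + (t:ℂ)*b := by ring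
    have hnz := hne t ht
    rw [hd]
    field_simp
    rw [hb]
  have hcont : IntervalIntegrable
      (fun t : ℝ => (q - p) / (((1 - (t : ℂ)) * p + (t : ℂ) * q) - z)) MeasureTheory.volume 0 1 := by
    apply ContinuousOn.intervalIntegrable
    apply ContinuousOn.div continuousOn_const
    · fun_prop
    · intro t ht
      rw [Set.uIcc_of_le zero_le_one] at ht
      have := hne t ht
      intro h; apply this; rw [show a + (t:ℂ)*b = ((1 - (t : ℂ)) * p + (t : ℂ) * q) - z by ring, h]
  have hint := intervalIntegral.integral_eq_sub_of_hasDerivAt key hcont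
  rw [hint]
  have e1 : (a + ((1:ℝ):ℂ)*b)/a = (q - z)/(p - z) := by
    push_cast; rw [ha, hb]; ring_nf
  have e0 : (a + ((0:ℝ):ℂ)*b)/a = 1 := by
    push_cast; rw [zero_mul, add_zero, div_self hp]
  rw [e1, e0, Complex.log_one, sub_zero]
  set L := Complex.log ((q - z)/(p - z)) with hL
  have harg : L.im = Complex.arg ((q - z)/(p - z)) := Complex.log_im _
  rw [← harg]
  have hpi : (Real.pi : ℝ) ≠ 0 := Real.pi_ne_zero
  have hrw : (1 / (2 * (Real.pi : ℂ) * Complex.I)) * L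
      = Complex.I * (-(1/(2*Real.pi) : ℝ) * L) := by
    have hpc : ((Real.pi : ℝ) : ℂ) ≠ 0 := Complex.ofReal_ne_zero.2 hpi
    push_cast
    field_simp [Complex.I_ne_zero]
    linear_combination L * Complex.I_mul_I
  rw [hrw]
  simp [Complex.mul_re, Complex.mul_im]
end

section
/- Let n ≥ 1, let z₁, …, zₙ ∈ ℂ and α₁, …, αₙ ∈ ℝ with α̃ := α₁ + ⋯ + αₙ ≠ 0, and set c := (1/α̃)·(α₁z₁ + ⋯ + αₙzₙ). Then there exist constants C > 0 and R > 0 (with R > max(|c|, |z₁|, …, |zₙ|)) such that for all z ∈ ℂ with |z| ≥ R one has |α̃/(z − c) − Σᵢ αᵢ/(z − zᵢ)| ≤ C/|z|³. Equivalently, the difference of magnetic vector potentials Ã_{α̃,c} − Σᵢ A_{zᵢ,αᵢ} has Euclidean norm O(|z|⁻³) as |z| → ∞, where A_{s,α}(x,y) = −α·( −(y−b)/((x−a)²+(y−b)²), (x−a)/((x−a)²+(y−b)²) ) for s = (a,b). -/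
/-- Cancellation estimate for the regularization (Section 5 of the paper): with the
comparison solenoid at the flux-weighted center of mass `c` and total flux `α̃`, the
difference `α̃/(z - c) - Σᵢ αᵢ/(z - zᵢ)` is `O(|z|⁻³)` as `|z| → ∞`. -/
theorem stmt_4 (n : ℕ) (hn : 1 ≤ n) (z : Fin n → ℂ) (α : Fin n → ℝ)
    (hα : (∑ i, α i) ≠ 0) :
    let αt : ℝ := ∑ i, α i
    let c : ℂ := ((αt : ℂ))⁻¹ * ∑ i, (α i : ℂ) * z i
    ∃ C > (0:ℝ), ∃ R > (0:ℝ),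
      (‖c‖ < R ∧ ∀ i, ‖z i‖ < R) ∧
      ∀ w : ℂ, R ≤ ‖w‖ →
        ‖(αt : ℂ) / (w - c) - ∑ i, (α i : ℂ) / (w - z i)‖
          ≤ C / (‖w‖) ^ 3 := by
  intro αt c
  have hαt : (αt : ℂ) ≠ 0 := by
    simpa [αt] using Complex.ofReal_ne_zero.mpr hα
  -- center of mass identity
  have hc : (αt : ℂ) * c = ∑ i, (α i : ℂ) * z i := by
    simp [c, mul_inv_cancel_left₀ hαt]
  set M : ℝ := ‖c‖ + (∑ i, ‖z i‖) + 1 with hM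
  have hsum_nonneg : 0 ≤ ∑ i, ‖z i‖ :=
    Finset.sum_nonneg fun i _ => norm_nonneg _
  have hMc : ‖c‖ < M := by
    have := hsum_nonneg; simp [hM]; linarith
  have hMz : ∀ i, ‖z i‖ < M := by
    intro i
    have h1 : ‖z i‖ ≤ ∑ j, ‖z j‖ :=
      Finset.single_le_sum (fun j _ => norm_nonneg _) (Finset.mem_univ i)
    have := norm_nonneg c
    simp only [hM]; linarith
  have hMpos : 0 < M := lt_of_le_of_lt (norm_nonneg c) hMc
  set C : ℝ := 2 * (|αt| * ‖c‖ ^ 2 + ∑ i, |α i| * ‖z i‖ ^ 2) + 1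
    with hC
  have hCpos : 0 < C := by
    have h1 : 0 ≤ |αt| * ‖c‖ ^ 2 := by positivity
    have h2 : 0 ≤ ∑ i, |α i| * ‖z i‖ ^ 2 :=
      Finset.sum_nonneg fun i _ => by positivity
    simp only [hC]; linarith
  refine ⟨C, hCpos, 2 * M, by linarith, ⟨by linarith, fun i => by have := hMz i; linarith⟩,
    fun w hw => ?_⟩
  have hwpos : 0 < ‖w‖ := by linarith
  have hw0 : w ≠ 0 := by
    intro h; rw [h] at hwpos; simp at hwpos
  -- basic lower bound : |w - a| ≥ |w|/2 for |a| < M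
  have hlow : ∀ a : ℂ, ‖a‖ < M → ‖w‖ / 2 ≤ ‖w - a‖ := by
    intro a ha
    have h := norm_add_le (w - a) a
    rw [sub_add_cancel] at h
    linarith
  have hwc0 : w - c ≠ 0 := by
    intro h
    have := hlow c hMc
    rw [h] at this; simp at this; linarith
  have hwz0 : ∀ i, w - z i ≠ 0 := by
    intro i h
    have := hlow (z i) (hMz i)
    rw [h] at this; simp at this; linarith
  -- expansion identity per term
  have hexp : ∀ (β a : ℂ), w - a ≠ 0 →
      β / (w - a) = β / w + β * a / w ^ 2 + β * a ^ 2 / (w ^ 2 * (w - a)) := by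
    intro β a ha
    field_simp
    ring
  -- the algebraic cancellation
  have key : (αt : ℂ) / (w - c) - ∑ i, (α i : ℂ) / (w - z i)
      = (αt : ℂ) * c ^ 2 / (w ^ 2 * (w - c))
        - ∑ i, (α i : ℂ) * (z i) ^ 2 / (w ^ 2 * (w - z i)) := by
    rw [hexp _ _ hwc0]
    have : ∀ i ∈ Finset.univ, (α i : ℂ) / (w - z i)
        = (α i : ℂ) / w + (α i : ℂ) * z i / w ^ 2
          + (α i : ℂ) * (z i) ^ 2 / (w ^ 2 * (w - z i)) :=
      fun i _ => hexp _ _ (hwz0 i)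
    rw [Finset.sum_congr rfl this]
    rw [Finset.sum_add_distrib, Finset.sum_add_distrib]
    have h1 : ∑ i, (α i : ℂ) / w = (αt : ℂ) / w := by
      rw [← Finset.sum_div]; simp [αt]
    have h2 : ∑ i, (α i : ℂ) * z i / w ^ 2 = (αt : ℂ) * c / w ^ 2 := by
      rw [← Finset.sum_div, ← hc]
    rw [h1, h2]; ring
  rw [key]
  -- bound each term
  have hterm : ∀ (β a : ℂ), ‖a‖ < M →
      ‖β * a ^ 2 / (w ^ 2 * (w - a))‖
        ≤ 2 * (‖β‖ * ‖a‖ ^ 2) / ‖w‖ ^ 3 := by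
    intro β a ha
    have hwa := hlow a ha
    rw [norm_div, norm_mul, norm_mul, norm_pow, norm_pow]
    have hden : ‖w‖ ^ 3 / 2 ≤ ‖w‖ ^ 2 * ‖w - a‖ := by
      have : ‖w‖ ^ 3 / 2 = ‖w‖ ^ 2 * (‖w‖ / 2) := by ring
      rw [this]
      exact mul_le_mul_of_nonneg_left hwa (by positivity)
    have hdenpos : 0 < ‖w‖ ^ 2 * ‖w - a‖ := by
      have : 0 < ‖w‖ / 2 := by linarith
      have := lt_of_lt_of_le this hwa
      positivity
    rw [div_le_div_iff₀ hdenpos (by positivity)]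
    calc ‖β‖ * ‖a‖ ^ 2 * ‖w‖ ^ 3
        = (‖β‖ * ‖a‖ ^ 2) * ‖w‖ ^ 3 := by ring
      _ ≤ (‖β‖ * ‖a‖ ^ 2) * (2 * (‖w‖ ^ 2 * ‖w - a‖)) := by
          apply mul_le_mul_of_nonneg_left _ (by positivity)
          linarith
      _ = 2 * (‖β‖ * ‖a‖ ^ 2) * (‖w‖ ^ 2 * ‖w - a‖) := by
          ring
  calc ‖(αt : ℂ) * c ^ 2 / (w ^ 2 * (w - c))
        - ∑ i, (α i : ℂ) * (z i) ^ 2 / (w ^ 2 * (w - z i))‖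
      ≤ ‖(αt : ℂ) * c ^ 2 / (w ^ 2 * (w - c))‖
        + ‖∑ i, (α i : ℂ) * (z i) ^ 2 / (w ^ 2 * (w - z i))‖ := by
        exact norm_sub_le _ _
    _ ≤ 2 * (|αt| * ‖c‖ ^ 2) / ‖w‖ ^ 3
        + ∑ i, 2 * (|α i| * ‖z i‖ ^ 2) / ‖w‖ ^ 3 := by
        apply add_le_add
        · simpa [Complex.norm_real, Real.norm_eq_abs] using hterm (αt : ℂ) c hMc
        · refine le_trans (norm_sum_le _ _) (Finset.sum_le_sum fun i _ => ?_)
          simpa [Complex.norm_real, Real.norm_eq_abs] using hterm ((α i : ℂ)) (z i) (hMz i)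
    _ ≤ C / ‖w‖ ^ 3 := by
        rw [← Finset.sum_div, ← add_div]
        gcongr
        have : ∑ i, 2 * (|α i| * ‖z i‖ ^ 2)
            = 2 * ∑ i, |α i| * ‖z i‖ ^ 2 := by
          rw [Finset.mul_sum]
        rw [this, hC]
        ring_nf
        linarith
end
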